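/- For a nonempty set A, there exists a subset B of G(A) such that for all subsets M, N, P of G(A), ((B·M)·N)·P = M·(N·P). That is, the graph model contains an element realizing the composition combinator B. -/

import Mathlib

universe u

/-- The graph model `G(A)`: the least set containing the atoms `A` and closed under
forming pairs `α → a` where `α` is a finite (possibly empty) collection of elements
of `G(A)` (encoded as a list) and `a ∈ G(A)`. -/
inductive G (A : Type u) : Type u
  | atom : A → G A
  | arrow : List (G A) → G A → G A

/-- The application operation of the graph model:
`M · N = {x : ∃ α, (α → x) ∈ M ∧ α ⊆ N}`. -/
def ap {A : Type u} (M N : Set (G A)) : Set (G A) :=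
  {x | ∃ α : List (G A), G.arrow α x ∈ M ∧ ∀ b ∈ α, b ∈ N}

/-- The graph model contains an element realizing the composition combinator `B`:
there is `B ⊆ G(A)` with `((B·M)·N)·P = M·(N·P)` for all `M, N, P ⊆ G(A)`. -/
theorem B_realized {A : Type u} [Nonempty A] :
    ∃ B : Set (G A), ∀ M N P : Set (G A), ap (ap (ap B M) N) P = ap M (ap N P) := by
  classical
  refine ⟨{ z | ∃ (l : List (List (G A) × G A)) (x : G A),
      z = G.arrow [G.arrow (l.map Prod.snd) x]
            (G.arrow (l.map fun p => G.arrow p.1 p.2)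
              (G.arrow (l.map Prod.fst).flatten x)) }, ?_⟩
  intro M N P
  ext x
  simp only [ap, Set.mem_setOf_eq]
  constructor
  · rintro ⟨γ, ⟨β, ⟨α, hB, hα⟩, hβ⟩, hγ⟩
    obtain ⟨l, x', heq⟩ := hB
    simp only [G.arrow.injEq] at heq
    obtain ⟨hα', hβ', hγ', hx'⟩ := heq
    subst hα' hβ' hγ' hx'
    refine ⟨l.map Prod.snd, hα _ (by simp), ?_⟩
    intro d hd
    simp only [List.mem_map] at hd
    obtain ⟨p, hp, rfl⟩ := hd
    refine ⟨p.1, hβ _ ?_, ?_⟩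
    · simp only [List.mem_map]; exact ⟨p, hp, rfl⟩
    · intro b hb
      exact hγ _ (List.mem_flatten.2 ⟨p.1, List.mem_map.2 ⟨p, hp, rfl⟩, hb⟩)
  · rintro ⟨δ, hM, hδ⟩
    choose ε hN hP using hδ
    refine ⟨(δ.attach.map fun d => ((ε d.1 d.2, d.1) : List (G A) × G A)).map Prod.fst |>.flatten,
      ⟨(δ.attach.map fun d => ((ε d.1 d.2, d.1) : List (G A) × G A)).map
        (fun p => G.arrow p.1 p.2),
        ⟨[G.arrow ((δ.attach.map fun d => ((ε d.1 d.2, d.1) : List (G A) × G A)).map Prod.snd) x],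
          ⟨δ.attach.map fun d => ((ε d.1 d.2, d.1) : List (G A) × G A), x, rfl⟩, ?_⟩, ?_⟩, ?_⟩
    · intro b hb
      simp only [List.mem_singleton] at hb
      subst hb
      have : (δ.attach.map fun d => ((ε d.1 d.2, d.1) : List (G A) × G A)).map Prod.snd = δ := by
        simp [List.map_map, Function.comp]
      rw [this]; exact hM
    · intro b hb
      simp only [List.mem_map, List.mem_attach, true_and] at hb
      obtain ⟨p, ⟨d, rfl⟩, rfl⟩ := hb
      exact hN d.1 d.2
    · intro b hb
      simp only [List.map_map] at hb
      rw [List.mem_flatten] at hb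
      obtain ⟨L, hL, hbL⟩ := hb
      simp only [List.mem_map, List.mem_attach, true_and, Function.comp] at hL
      obtain ⟨d, rfl⟩ := hL
      exact hP d.1 d.2 _ hbL
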